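/- Let 𝔽_q be the finite field with q elements. Then the number of polynomial functions on the ring of dual numbers 𝔽_q[α] equals q^{3q}. -/

import Mathlib

open Polynomial TrivSqZeroExt

section Aux

variable {F : Type*} [Field F]

private lemma keyFst (f : Polynomial (DualNumber F)) (a b : F) :
    fst (f.eval (inl a + inr b)) = fst (f.eval (inl a : DualNumber F)) := by
  induction f using Polynomial.induction_on' with
  | add p q hp hq => simp only [eval_add, fst_add, hp, hq]
  | monomial n c => simp [eval_monomial]

private lemma keySnd (f : Polynomial (DualNumber F)) (a b : F) :
    snd (f.eval (inl a + inr b)) =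
      snd (f.eval (inl a : DualNumber F)) +
        b * (snd (f.eval (inl a + inr 1)) - snd (f.eval (inl a : DualNumber F))) := by
  induction f using Polynomial.induction_on' with
  | add p q hp hq =>
    simp only [eval_add, snd_add, hp, hq]
    ring
  | monomial n c =>
    simp only [eval_monomial, snd_mul, fst_mul, snd_pow, fst_pow, fst_add, snd_add,
      fst_inl, snd_inl, fst_inr, snd_inr, smul_eq_mul, op_smul_eq_smul, nsmul_eq_mul,
      add_zero, zero_add, mul_zero, mul_one]
    ring

private lemma mapInlFst (P : Polynomial F) (a b : F) :
    fst (((P.map (inlHom F F)).eval (inl a + inr b) : DualNumber F)) = P.eval a := by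
  induction P using Polynomial.induction_on' with
  | add p q hp hq => simp only [Polynomial.map_add, eval_add, fst_add, hp, hq]
  | monomial n c => simp [eval_monomial]

private lemma mapInlSnd (P : Polynomial F) (a b : F) :
    snd (((P.map (inlHom F F)).eval (inl a + inr b) : DualNumber F)) =
      b * P.derivative.eval a := by
  induction P using Polynomial.induction_on' with
  | add p q hp hq =>
    simp only [Polynomial.map_add, eval_add, snd_add, derivative_add, hp, hq]
    ring
  | monomial n c =>
    simp only [map_monomial, eval_monomial, derivative_monomial, snd_mul, fst_mul,
      snd_pow, fst_pow, fst_add, snd_add, fst_inl, snd_inl, fst_inr, snd_inr,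
      smul_eq_mul, op_smul_eq_smul, nsmul_eq_mul, add_zero, zero_add, mul_zero, mul_one,
      inlHom_apply, Nat.pred_eq_sub_one]
    ring

private lemma exists_poly [Fintype F] [DecidableEq F] (u v w : F → F) :
    ∃ f : Polynomial (DualNumber F), ∀ a b : F,
      f.eval (inl a + inr b) = inl (u a) + inr (v a + b * w a) := by
  have hinj : Set.InjOn (id : F → F) (Finset.univ : Finset F) := Function.injective_id.injOn
  set P₀ : Polynomial F := Lagrange.interpolate Finset.univ id u with hP₀
  set N : Polynomial F := Lagrange.nodal Finset.univ (id : F → F) with hN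
  have hN' : ∀ a : F, N.derivative.eval a ≠ 0 := by
    intro a
    have h1 : Lagrange.nodalWeight Finset.univ (id : F → F) a ≠ 0 :=
      Lagrange.nodalWeight_ne_zero hinj (Finset.mem_univ a)
    have h2 : Lagrange.nodalWeight Finset.univ (id : F → F) a
        = (N.derivative.eval a)⁻¹ :=
      Lagrange.nodalWeight_eq_eval_derivative_nodal (Finset.mem_univ a)
    intro h
    rw [h2, h, inv_zero] at h1
    exact h1 rfl
  set k : F → F := fun a => (w a - P₀.derivative.eval a) / (N.derivative.eval a) with hk
  set P : Polynomial F := P₀ + N * Lagrange.interpolate Finset.univ id k with hP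
  set Q : Polynomial F := Lagrange.interpolate Finset.univ id v with hQ
  have hNval : ∀ a : F, N.eval a = 0 := fun a =>
    Lagrange.eval_nodal_at_node (v := (id : F → F)) (Finset.mem_univ a)
  have hPval : ∀ a : F, P.eval a = u a := by
    intro a
    have h1 : P₀.eval a = u a :=
      Lagrange.eval_interpolate_at_node _ hinj (Finset.mem_univ a)
    rw [hP, eval_add, eval_mul, hNval a, h1]
    ring
  have hP'val : ∀ a : F, P.derivative.eval a = w a := by
    intro a
    have h1 : (Lagrange.interpolate Finset.univ id k).eval a = k a :=
      Lagrange.eval_interpolate_at_node _ hinj (Finset.mem_univ a)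
    rw [hP, derivative_add, derivative_mul, eval_add, eval_add, eval_mul, eval_mul,
      hNval a, h1, hk]
    rw [← mul_div_assoc, mul_div_cancel_left₀ _ (hN' a)]
    ring
  have hQval : ∀ a : F, Q.eval a = v a := fun a =>
    Lagrange.eval_interpolate_at_node _ hinj (Finset.mem_univ a)
  refine ⟨P.map (inlHom F F) + C (inr 1) * Q.map (inlHom F F), fun a b => ?_⟩
  refine TrivSqZeroExt.ext ?_ ?_
  · simp only [eval_add, eval_mul, eval_C, fst_add, fst_mul, fst_inr, fst_inl,
      zero_mul, add_zero, mapInlFst, hPval a]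
  · simp only [eval_add, eval_mul, eval_C, snd_add, snd_mul, fst_inr, snd_inr,
      snd_inl, fst_inl, zero_smul, smul_eq_mul, op_smul_eq_smul, mapInlFst,
      mapInlSnd, hPval, hP'val, hQval, zero_add, add_zero, mul_one]
    ring

end Aux

/-- **Corollary (number of polynomial functions on 𝔽_q[α]).**
The number of polynomial functions on the ring of dual numbers over the finite
field with `q` elements equals `q ^ (3q)`. -/
theorem card_polyFun_dualNumber_finField (F : Type*) [Field F] [Fintype F]
    (q : ℕ) (hq : Fintype.card F = q) :
    Nat.card {G : DualNumber F → DualNumber F //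
        ∃ f : Polynomial (DualNumber F), ∀ a, G a = f.eval a} = q ^ (3 * q) := by
  classical
  have e : {G : DualNumber F → DualNumber F //
      ∃ f : Polynomial (DualNumber F), ∀ a, G a = f.eval a} ≃
      ((F → F) × (F → F) × (F → F)) :=
    { toFun := fun G =>
        (fun a => fst (G.1 (inl a)),
         fun a => snd (G.1 (inl a)),
         fun a => snd (G.1 (inl a + inr 1)) - snd (G.1 (inl a)))
      invFun := fun t =>
        ⟨fun x => inl (t.1 (fst x)) + inr (t.2.1 (fst x) + snd x * t.2.2 (fst x)), by
          obtain ⟨f, hf⟩ := exists_poly t.1 t.2.1 t.2.2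
          refine ⟨f, fun x => ?_⟩
          conv_rhs => rw [← inl_fst_add_inr_snd_eq x]
          rw [hf (fst x) (snd x)]⟩
      left_inv := by
        rintro ⟨G, f, hf⟩
        refine Subtype.ext (funext fun x => ?_)
        simp only [hf]
        conv_rhs => rw [← inl_fst_add_inr_snd_eq x]
        refine TrivSqZeroExt.ext ?_ ?_
        · rw [fst_add, fst_inl, fst_inr, add_zero]
          exact (keyFst f (fst x) (snd x)).symm
        · rw [snd_add, snd_inl, snd_inr, zero_add]
          exact (keySnd f (fst x) (snd x)).symm
      right_inv := by
        rintro ⟨u, v, w⟩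
        refine Prod.ext (funext fun a => ?_) (Prod.ext (funext fun a => ?_)
          (funext fun a => ?_)) <;> simp }
  rw [Nat.card_congr e, Nat.card_prod, Nat.card_prod, Nat.card_eq_fintype_card,
    Fintype.card_fun, hq, ← pow_add, ← pow_add]
  congr 1
  ring
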